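/- Let V be a finite-dimensional real inner product space and let Q be a positive semi-definite symmetric bilinear form on V. Define on V × V the quadratic expression Q̃(a∧b) := ‖a‖² Q(b,b) - 2⟨a,b⟩ Q(a,b) + ‖b‖² Q(a,a). Then Q̃(a∧b) ≥ 0 for all a, b ∈ V, and Q̃(a∧b) depends only on the exterior product a∧b (i.e., Q̃(a∧b) = Q̃(a'∧b') whenever a∧b = a'∧b' in Λ²V). -/
import Mathlib


open scoped RealInnerProductSpace

section WedgeAux

variable {V : Type*} [NormedAddCommGroup V] [InnerProductSpace ℝ V]

/-- A bilinear form vanishing on the diagonal, as an alternating map on `Fin 2`. -/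
def wedgeBilinAlt (B : V →ₗ[ℝ] V →ₗ[ℝ] ℝ) (hB : ∀ v, B v v = 0) : V [⋀^Fin 2]→ₗ[ℝ] ℝ where
  toFun v := B (v 0) (v 1)
  map_update_add' v i x y := by fin_cases i <;> simp
  map_update_smul' v i c x := by fin_cases i <;> simp
  map_eq_zero_of_eq' v i j hij hne := by
    fin_cases i <;> fin_cases j
    · exact absurd rfl hne
    · show B (v 0) (v 1) = 0
      rw [show v 0 = v 1 from hij]; exact hB _
    · show B (v 0) (v 1) = 0
      rw [show v 1 = v 0 from hij]; exact hB _
    · exact absurd rfl hne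

/-- The four-variable auxiliary form. -/
def wedgeF (Q : V →ₗ[ℝ] V →ₗ[ℝ] ℝ) (a b c d : V) : ℝ :=
  ⟪a, c⟫ * Q b d - ⟪a, d⟫ * Q b c + ⟪b, d⟫ * Q a c - ⟪b, c⟫ * Q a d

/-- `wedgeF Q a b` as a bilinear map in the last two variables. -/
def wedgeB (Q : V →ₗ[ℝ] V →ₗ[ℝ] ℝ) (a b : V) : V →ₗ[ℝ] V →ₗ[ℝ] ℝ :=
  LinearMap.mk₂ ℝ (fun c d => wedgeF Q a b c d)
    (fun c c' d => by
      simp only [wedgeF, inner_add_right, map_add, LinearMap.add_apply]; ring)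
    (fun r c d => by
      simp only [wedgeF, inner_smul_right, map_smul, LinearMap.smul_apply, smul_eq_mul]; ring)
    (fun c d d' => by
      simp only [wedgeF, inner_add_right, map_add, LinearMap.add_apply]; ring)
    (fun r c d => by
      simp only [wedgeF, inner_smul_right, map_smul, LinearMap.smul_apply, smul_eq_mul]; ring)

theorem wedgeB_diag (Q : V →ₗ[ℝ] V →ₗ[ℝ] ℝ) (a b : V) (v : V) : wedgeB Q a b v v = 0 := by
  simp only [wedgeB, LinearMap.mk₂_apply, wedgeF]; ring

/-- The lift of `wedgeF Q a b` to the exterior algebra. -/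
noncomputable def wedgeL (Q : V →ₗ[ℝ] V →ₗ[ℝ] ℝ) (a b : V) :
    ExteriorAlgebra ℝ V →ₗ[ℝ] ℝ :=
  ExteriorAlgebra.liftAlternating
    (fun i => match i with
      | 2 => wedgeBilinAlt (wedgeB Q a b) (wedgeB_diag Q a b)
      | _ => 0)

theorem wedgeL_mul (Q : V →ₗ[ℝ] V →ₗ[ℝ] ℝ) (a b c d : V) :
    wedgeL Q a b (ExteriorAlgebra.ι ℝ c * ExteriorAlgebra.ι ℝ d) = wedgeF Q a b c d := by
  have h2 : ExteriorAlgebra.ι ℝ c * ExteriorAlgebra.ι ℝ d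
      = ExteriorAlgebra.ιMulti ℝ 2 ![c, d] := by
    simp [ExteriorAlgebra.ιMulti_apply]
  rw [wedgeL, h2, ExteriorAlgebra.liftAlternating_apply_ιMulti]
  rfl

end WedgeAux

/-- For a positive semi-definite symmetric bilinear form `Q` on a finite-dimensional
real inner product space, the quantity
`Q̃(a∧b) = ‖a‖²Q(b,b) - 2⟨a,b⟩Q(a,b) + ‖b‖²Q(a,a)` is nonnegative and depends
only on the exterior product `a ∧ b` (taken in the exterior algebra). -/
theorem wedge_quadratic_form_nonneg_and_welldefined
    (V : Type*) [NormedAddCommGroup V] [InnerProductSpace ℝ V] [FiniteDimensional ℝ V]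
    (Q : V →ₗ[ℝ] V →ₗ[ℝ] ℝ)
    (hsymm : ∀ v w, Q v w = Q w v)
    (hpsd : ∀ v, 0 ≤ Q v v) :
    (∀ a b : V,
      0 ≤ ‖a‖^2 * Q b b - 2 * ⟪a, b⟫ * Q a b + ‖b‖^2 * Q a a) ∧
    (∀ a b a' b' : V,
      (ExteriorAlgebra.ι ℝ a) * (ExteriorAlgebra.ι ℝ b)
        = (ExteriorAlgebra.ι ℝ a') * (ExteriorAlgebra.ι ℝ b') →
      ‖a‖^2 * Q b b - 2 * ⟪a, b⟫ * Q a b + ‖b‖^2 * Q a a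
        = ‖a'‖^2 * Q b' b' - 2 * ⟪a', b'⟫ * Q a' b' + ‖b'‖^2 * Q a' a') := by
  -- Cauchy–Schwarz for `Q`
  have hC : ∀ u w : V, (Q u w) ^ 2 ≤ Q u u * Q w w := by
    intro u w
    have h := discrim_le_zero (a := Q w w) (b := 2 * Q u w) (c := Q u u) ?_
    · rw [discrim] at h; nlinarith [h]
    · intro x
      have h0 := hpsd (u + x • w)
      simp only [map_add, map_smul, LinearMap.add_apply, LinearMap.smul_apply,
        smul_eq_mul] at h0
      rw [hsymm w u] at h0
      nlinarith [h0]
  -- the diagonal of `wedgeF` is the quantity in question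
  have hdiag : ∀ a b : V,
      wedgeF Q a b a b = ‖a‖^2 * Q b b - 2 * ⟪a, b⟫ * Q a b + ‖b‖^2 * Q a a := by
    intro a b
    simp only [wedgeF, real_inner_self_eq_norm_sq, hsymm b a, real_inner_comm b a]
    ring
  constructor
  · intro a b
    have h1 : ⟪a, b⟫ ^ 2 ≤ ‖a‖ ^ 2 * ‖b‖ ^ 2 := by
      have := abs_real_inner_le_norm a b
      nlinarith [abs_nonneg ⟪a, b⟫, sq_abs ⟪a, b⟫, norm_nonneg a, norm_nonneg b]
    have h12 : ⟪a, b⟫ ^ 2 * (Q a b) ^ 2 ≤ ‖a‖ ^ 2 * ‖b‖ ^ 2 * (Q a a * Q b b) :=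
      mul_le_mul h1 (hC a b) (sq_nonneg _) (by positivity)
    nlinarith [h12, sq_nonneg (‖a‖ ^ 2 * Q b b - ‖b‖ ^ 2 * Q a a),
      mul_nonneg (sq_nonneg ‖a‖) (hpsd b), mul_nonneg (sq_nonneg ‖b‖) (hpsd a)]
  · intro a b a' b' h
    -- symmetry of `wedgeF` under swapping the pairs
    have hswap : ∀ a b c d : V, wedgeF Q a b c d = wedgeF Q c d a b := by
      intro a b c d
      simp only [wedgeF, hsymm a c, hsymm a d, hsymm b c, hsymm b d,
        real_inner_comm a c, real_inner_comm a d, real_inner_comm b c, real_inner_comm b d]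
      ring
    have key : wedgeF Q a b a b = wedgeF Q a' b' a' b' := by
      calc wedgeF Q a b a b
          = wedgeL Q a b (ExteriorAlgebra.ι ℝ a * ExteriorAlgebra.ι ℝ b) :=
            (wedgeL_mul Q a b a b).symm
        _ = wedgeL Q a b (ExteriorAlgebra.ι ℝ a' * ExteriorAlgebra.ι ℝ b') := by rw [h]
        _ = wedgeF Q a b a' b' := wedgeL_mul Q a b a' b'
        _ = wedgeF Q a' b' a b := hswap a b a' b'
        _ = wedgeL Q a' b' (ExteriorAlgebra.ι ℝ a * ExteriorAlgebra.ι ℝ b) :=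
            (wedgeL_mul Q a' b' a b).symm
        _ = wedgeL Q a' b' (ExteriorAlgebra.ι ℝ a' * ExteriorAlgebra.ι ℝ b') := by rw [h]
        _ = wedgeF Q a' b' a' b' := wedgeL_mul Q a' b' a' b'
    rw [← hdiag a b, ← hdiag a' b', key]
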